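/- Let G = Q₈ be the quaternion group of order 8, and let ρ : G → GL(V) be a representation on a 3-dimensional complex vector space V whose character χ satisfies χ(x) = 1 for every element x of order 4 and χ(x) = -1 for the unique element of order 2. Then the dimension of the subspace of G-invariants of the symmetric square S²V (with the induced G-action S²ρ) equals 1. -/

import Mathlib

open TensorProduct

open LinearMap QuaternionGroup


lemma trace_map_comp_comm' {V : Type*} [AddCommGroup V] [Module ℂ V] [FiniteDimensional ℂ V]
    (f : V →ₗ[ℂ] V) :
    trace ℂ (V ⊗[ℂ] V) ((TensorProduct.map f f) ∘ₗ (TensorProduct.comm ℂ V V).toLinearMap)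
      = trace ℂ V (f ∘ₗ f) := by
  classical
  let b := Module.finBasis ℂ V
  let B := Module.Basis.tensorProduct b b
  rw [trace_eq_matrix_trace ℂ B, trace_eq_matrix_trace ℂ b, LinearMap.toMatrix_comp b b b,
    Matrix.trace, Matrix.trace]
  have hdiag : ∀ p : Fin (Module.finrank ℂ V) × Fin (Module.finrank ℂ V),
      (LinearMap.toMatrix B B ((TensorProduct.map f f) ∘ₗ
        (TensorProduct.comm ℂ V V).toLinearMap)).diag p
      = LinearMap.toMatrix b b f p.1 p.2 * LinearMap.toMatrix b b f p.2 p.1 := by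
    rintro ⟨i, j⟩
    simp [Matrix.diag, LinearMap.toMatrix_apply, B, Module.Basis.tensorProduct_apply,
      Module.Basis.tensorProduct_repr_tmul_apply, mul_comm]
  rw [Finset.sum_congr rfl fun p _ => hdiag p]
  rw [Fintype.sum_prod_type]
  simp [Matrix.diag, Matrix.mul_apply]

lemma trace_sym_sq {V : Type*} [AddCommGroup V] [Module ℂ V] [FiniteDimensional ℂ V]
    (f : V →ₗ[ℂ] V)
    (F : ((V ⊗[ℂ] V) ⧸ Submodule.span ℂ {x : V ⊗[ℂ] V | ∃ v w : V, x = v ⊗ₜ[ℂ] w - w ⊗ₜ[ℂ] v})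
      →ₗ[ℂ] ((V ⊗[ℂ] V) ⧸ Submodule.span ℂ {x : V ⊗[ℂ] V | ∃ v w : V, x = v ⊗ₜ[ℂ] w - w ⊗ₜ[ℂ] v}))
    (hF : ∀ v w : V, F (Submodule.Quotient.mk (v ⊗ₜ[ℂ] w))
      = Submodule.Quotient.mk (f v ⊗ₜ[ℂ] f w)) :
    trace ℂ _ F = 2⁻¹ * (trace ℂ V f * trace ℂ V f + trace ℂ V (f ∘ₗ f)) := by
  classical
  revert F
  set A : Submodule ℂ (V ⊗[ℂ] V) :=
    Submodule.span ℂ {x : V ⊗[ℂ] V | ∃ v w : V, x = v ⊗ₜ[ℂ] w - w ⊗ₜ[ℂ] v} with hAdef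
  intro F hF
  set T : V ⊗[ℂ] V →ₗ[ℂ] V ⊗[ℂ] V := (TensorProduct.comm ℂ V V).toLinearMap with hTdef
  have hTT : ∀ x, T (T x) = x := by
    intro x
    have : T ∘ₗ T = LinearMap.id := TensorProduct.ext' (by intro v w; simp [T])
    calc T (T x) = (T ∘ₗ T) x := rfl
    _ = x := by rw [this]; rfl
  set Ff : V ⊗[ℂ] V →ₗ[ℂ] V ⊗[ℂ] V := TensorProduct.map f f with hFfdef
  have hcomm : ∀ x, T (Ff x) = Ff (T x) := by
    intro x
    have : T ∘ₗ Ff = Ff ∘ₗ T := TensorProduct.ext' (by intro v w; simp [T, Ff])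
    calc T (Ff x) = (T ∘ₗ Ff) x := rfl
    _ = (Ff ∘ₗ T) x := by rw [this]
    _ = Ff (T x) := rfl
  set S : Submodule ℂ (V ⊗[ℂ] V) := LinearMap.ker (LinearMap.id - T) with hSdef
  have hSmem : ∀ x, x ∈ S ↔ T x = x := by
    intro x
    simp only [S, LinearMap.mem_ker, LinearMap.sub_apply, LinearMap.id_apply, sub_eq_zero]
    exact eq_comm
  -- A = ker (id + T)
  have hsub : ∀ x : V ⊗[ℂ] V, x - T x ∈ A := by
    intro x
    induction x using TensorProduct.induction_on with
    | zero => simp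
    | tmul v w =>
        refine Submodule.subset_span ?_
        exact ⟨v, w, by simp [T]⟩
    | add x y hx hy =>
        have : (x + y) - T (x + y) = (x - T x) + (y - T y) := by
          rw [map_add]; abel
        rw [this]; exact add_mem hx hy
  have hA : A = LinearMap.ker (LinearMap.id + T) := by
    apply le_antisymm
    · rw [hAdef, Submodule.span_le]
      rintro x ⟨v, w, rfl⟩
      simp only [SetLike.mem_coe, LinearMap.mem_ker, LinearMap.add_apply, LinearMap.id_apply,
        map_sub]
      simp only [T, LinearEquiv.coe_coe, TensorProduct.comm_tmul]
      abel
    · intro x hx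
      simp only [LinearMap.mem_ker, LinearMap.add_apply, LinearMap.id_apply] at hx
      have hTx : T x = -x := by linear_combination (norm := module) hx
      have : x = (2⁻¹ : ℂ) • (x - T x) := by
        rw [hTx]
        match_scalars
        norm_num
      rw [this]
      exact Submodule.smul_mem _ _ (hsub x)
  have hcompl : IsCompl A S := by
    constructor
    · rw [disjoint_iff_inf_le]
      intro x hx
      rw [Submodule.mem_inf] at hx
      obtain ⟨hx1, hx2⟩ := hx
      rw [hA, LinearMap.mem_ker] at hx1
      have hx1' : x + T x = 0 := hx1
      rw [hSmem] at hx2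
      rw [hx2] at hx1'
      have : x = 0 := by linear_combination (norm := module) (2⁻¹ : ℂ) • hx1'
      exact this ▸ Submodule.zero_mem ⊥
    · rw [codisjoint_iff, eq_top_iff]
      intro x _
      have h1 : (2⁻¹ : ℂ) • (x - T x) ∈ A := Submodule.smul_mem _ _ (hsub x)
      have h2 : (2⁻¹ : ℂ) • (x + T x) ∈ S := by
        rw [hSmem, map_smul, map_add, hTT]
        rw [add_comm]
      refine Submodule.mem_sup.mpr ⟨_, h1, _, h2, ?_⟩
      match_scalars <;> norm_num
  have hFS : ∀ x ∈ S, Ff x ∈ S := by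
    intro x hx
    rw [hSmem] at hx ⊢
    rw [hcomm, hx]
  -- identification of the quotient with S
  let e : ((V ⊗[ℂ] V) ⧸ A) ≃ₗ[ℂ] S := Submodule.quotientEquivOfIsCompl A S hcompl
  have hFQ : ∀ x : V ⊗[ℂ] V, F (Submodule.Quotient.mk x) = Submodule.Quotient.mk (Ff x) := by
    intro x
    induction x using TensorProduct.induction_on with
    | zero => simp
    | tmul v w => simpa [Ff] using hF v w
    | add x y hx hy =>
        rw [Submodule.Quotient.mk_add, map_add, hx, hy, map_add, Submodule.Quotient.mk_add]
  have heq : e.conj F = Ff.restrict hFS := by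
    ext s
    have h1 : e.symm s = Submodule.Quotient.mk (s : V ⊗[ℂ] V) :=
      Submodule.quotientEquivOfIsCompl_symm_apply A S hcompl s
    have h2 : F (e.symm s) = Submodule.Quotient.mk (Ff (s : V ⊗[ℂ] V)) := by
      rw [h1, hFQ]
    have h3 : e.symm ⟨Ff (s : V ⊗[ℂ] V), hFS _ s.2⟩
        = Submodule.Quotient.mk (Ff (s : V ⊗[ℂ] V)) :=
      Submodule.quotientEquivOfIsCompl_symm_apply A S hcompl _
    have : e.conj F s = e (F (e.symm s)) := by simp [LinearEquiv.conj_apply]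
    rw [this, h2, ← h3, e.apply_symm_apply]
    rfl
  have htr1 : trace ℂ _ F = trace ℂ S (Ff.restrict hFS) := by
    rw [← heq, LinearMap.trace_conj']
  -- the projection
  set P : V ⊗[ℂ] V →ₗ[ℂ] V ⊗[ℂ] V := (2⁻¹ : ℂ) • (LinearMap.id + T) with hPdef
  set R : V ⊗[ℂ] V →ₗ[ℂ] V ⊗[ℂ] V := Ff ∘ₗ P with hRdef
  have hTP : ∀ x, T (P x) = P x := by
    intro x
    simp only [P, LinearMap.smul_apply, LinearMap.add_apply, LinearMap.id_apply, map_smul,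
      map_add, hTT]
    rw [add_comm]
  have hRmem : ∀ x, R x ∈ S := by
    intro x
    rw [hSmem]
    show T (Ff (P x)) = Ff (P x)
    rw [hcomm, hTP]
  have hRS : Ff.restrict hFS = R.restrict (fun x _ => hRmem x) := by
    ext s
    have hs : P (s : V ⊗[ℂ] V) = (s : V ⊗[ℂ] V) := by
      have hTs : T (s : V ⊗[ℂ] V) = (s : V ⊗[ℂ] V) := (hSmem _).mp s.2
      simp only [P, LinearMap.smul_apply, LinearMap.add_apply, LinearMap.id_apply, hTs]
      match_scalars; norm_num
    show Ff (s : V ⊗[ℂ] V) = Ff (P (s : V ⊗[ℂ] V))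
    rw [hs]
  have htr2 : trace ℂ S (R.restrict (fun x _ => hRmem x)) = trace ℂ (V ⊗[ℂ] V) R :=
    LinearMap.trace_restrict_eq_of_forall_mem S R hRmem _
  rw [htr1, hRS, htr2]
  have hRsplit : R = (2⁻¹ : ℂ) • (Ff + Ff ∘ₗ T) := by
    ext x
    simp [R, P, mul_add, smul_add]
  rw [hRsplit, map_smul, map_add, LinearMap.trace_tensorProduct', trace_map_comp_comm' f]
  simp [smul_eq_mul]


/-- Let `G = Q₈` be the quaternion group of order 8, and let `ρ : G → GL(V)`
be a representation on a 3-dimensional complex vector space `V` whose character `χ` satisfies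
`χ(x) = 1` for every element `x` of order 4 and `χ(x) = -1` for the unique element of order 2.
Then the dimension of the subspace of `G`-invariants of the symmetric square `S²V`
(the quotient of `V ⊗ V` by the span of the elements `v ⊗ w - w ⊗ v`, with the induced
`G`-action `S²ρ`) equals `1`.

Here `Q₈` is realised as `QuaternionGroup 2`, the generalised quaternion group of order 8. -/
theorem invariants_sym_square_family5
    (V : Type*) [AddCommGroup V] [Module ℂ V] [FiniteDimensional ℂ V]
    (hdim : Module.finrank ℂ V = 3)
    (ρ : Representation ℂ (QuaternionGroup 2) V)
    (hχ₄ : ∀ x : QuaternionGroup 2, orderOf x = 4 → LinearMap.trace ℂ V (ρ x) = 1)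
    (hχ₂ : ∀ x : QuaternionGroup 2, orderOf x = 2 → LinearMap.trace ℂ V (ρ x) = -1)
    -- `S²ρ`: the induced representation on the symmetric square `S²V`
    (σ : Representation ℂ (QuaternionGroup 2)
      ((V ⊗[ℂ] V) ⧸ Submodule.span ℂ {x : V ⊗[ℂ] V | ∃ v w : V, x = v ⊗ₜ[ℂ] w - w ⊗ₜ[ℂ] v}))
    (hσ : ∀ (x : QuaternionGroup 2) (v w : V),
      σ x (Submodule.Quotient.mk (v ⊗ₜ[ℂ] w)) = Submodule.Quotient.mk (ρ x v ⊗ₜ[ℂ] ρ x w)) :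
    Module.finrank ℂ σ.invariants = 1 := by
  classical
  have hc : (Fintype.card (QuaternionGroup 2) : ℂ) = 8 := by
    rw [QuaternionGroup.card]; norm_num
  haveI : Invertible ((Fintype.card (QuaternionGroup 2) : ℂ)) :=
    invertibleOfNonzero (by rw [hc]; norm_num)
  have key := (Representation.isProj_averageMap σ).trace
  -- trace of the average map is the average of traces
  have havg : LinearMap.trace ℂ _ (Representation.averageMap σ)
      = ⅟(Fintype.card (QuaternionGroup 2) : ℂ) •
        ∑ g : QuaternionGroup 2, LinearMap.trace ℂ _ (σ g) := by
    rw [Representation.averageMap, GroupAlgebra.average, map_smul, map_sum, map_smul, map_sum]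
    simp [MonoidAlgebra.of_apply, Representation.asAlgebraHom_single]
  -- character of the symmetric square
  have htr : ∀ g : QuaternionGroup 2, LinearMap.trace ℂ _ (σ g)
      = 2⁻¹ * (LinearMap.trace ℂ V (ρ g) * LinearMap.trace ℂ V (ρ g)
          + LinearMap.trace ℂ V (ρ (g * g))) := by
    intro g
    rw [trace_sym_sq (ρ g) (σ g) (hσ g), map_mul, Module.End.mul_eq_comp]
  -- character values
  have hone : LinearMap.trace ℂ V (ρ 1) = 3 := by
    rw [map_one, LinearMap.trace_one, hdim]; norm_num
  have ha0 : (a 0 : QuaternionGroup 2) = 1 := (one_def).symm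
  have horda2 : orderOf (a 2 : QuaternionGroup 2) = 2 := by
    apply orderOf_eq_prime
    · decide
    · decide
  have horda1 : orderOf (a 1 : QuaternionGroup 2) = 4 := by
    rw [QuaternionGroup.orderOf_a_one]
  have ha3pow : (a 3 : QuaternionGroup 2) = (a 1) ^ 3 := by decide
  have horda3 : orderOf (a 3 : QuaternionGroup 2) = 4 := by
    rw [ha3pow, orderOf_pow, horda1]; norm_num
  -- squares
  have ha11 : (a 1 : QuaternionGroup 2) * a 1 = a 2 := by decide
  have ha33 : (a 3 : QuaternionGroup 2) * a 3 = a 2 := by decide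
  have hxaxa : ∀ i : ZMod (2*2), (xa i : QuaternionGroup 2) * xa i = a 2 := by decide
  have χ2 : LinearMap.trace ℂ V (ρ (a 2)) = -1 := hχ₂ _ horda2
  have χ1 : LinearMap.trace ℂ V (ρ (a 1)) = 1 := hχ₄ _ horda1
  have χ3 : LinearMap.trace ℂ V (ρ (a 3)) = 1 := hχ₄ _ horda3
  have χx : ∀ i : ZMod (2*2), LinearMap.trace ℂ V (ρ (xa i)) = 1 :=
    fun i => hχ₄ _ (orderOf_xa i)
  -- trace values
  have t0 : LinearMap.trace ℂ _ (σ (a 0)) = 6 := by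
    rw [htr, ha0, one_mul, hone]; norm_num
  have t1 : LinearMap.trace ℂ _ (σ (a 1)) = 0 := by
    rw [htr, ha11, χ1, χ2]; norm_num
  have t2 : LinearMap.trace ℂ _ (σ (a 2)) = 2 := by
    have : (a 2 : QuaternionGroup 2) * a 2 = 1 := by decide
    rw [htr, this, χ2, hone]; norm_num
  have t3 : LinearMap.trace ℂ _ (σ (a 3)) = 0 := by
    rw [htr, ha33, χ3, χ2]; norm_num
  have tx : ∀ i : ZMod (2*2), LinearMap.trace ℂ _ (σ (xa i)) = 0 := by
    intro i
    rw [htr, hxaxa, χx, χ2]; norm_num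
  -- the sum over the group
  have hsum : ∑ g : QuaternionGroup 2, LinearMap.trace ℂ _ (σ g) = 8 := by
    have huniv : (Finset.univ : Finset (QuaternionGroup 2))
        = {a 0, a 1, a 2, a 3, xa 0, xa 1, xa 2, xa 3} := by decide
    rw [huniv, Finset.sum_insert (by decide), Finset.sum_insert (by decide),
      Finset.sum_insert (by decide), Finset.sum_insert (by decide),
      Finset.sum_insert (by decide), Finset.sum_insert (by decide),
      Finset.sum_insert (by decide), Finset.sum_singleton,
      t0, t1, t2, t3, tx, tx, tx, tx]
    norm_num
  rw [havg, hsum] at key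
  have hinv : ⅟(Fintype.card (QuaternionGroup 2) : ℂ) = 8⁻¹ := by
    rw [invOf_eq_inv, hc]
  rw [hinv] at key
  have : ((Module.finrank ℂ σ.invariants : ℕ) : ℂ) = 1 := by
    rw [← key]; norm_num
  exact_mod_cast this
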